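/- For a hyperfield F and n ≥ 1, the subgroup 2Kₙ(F) equals the set of finite sums Σⱼ ρ(a_{j1})...ρ(a_{jn}) such that for each j some entry a_{jk} is a square b² with b ∈ Ḟ. -/

import Mathlib

/-- A multiring structure (multivalued addition) on a carrier `R`. -/
structure MulRingOps (R : Type*) where
  add : R → R → Set R
  mul : R → R → R
  neg : R → R
  zero : R
  one : R

namespace MulRingOps

variable {R : Type*}

/-- The multiring axioms. -/
structure IsMulRing (S : MulRingOps R) : Prop where
  add_nonempty : ∀ a b, (S.add a b).Nonempty
  add_comm : ∀ a b, S.add a b = S.add b a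
  rev_left : ∀ {x y z}, z ∈ S.add x y → x ∈ S.add z (S.neg y)
  rev_right : ∀ {x y z}, z ∈ S.add x y → y ∈ S.add (S.neg x) z
  zero_add : ∀ x y, y ∈ S.add S.zero x ↔ x = y
  add_assoc : ∀ x y z : R,
    (⋃ w ∈ S.add y z, S.add x w) = (⋃ t ∈ S.add x y, S.add t z)
  mul_comm : ∀ a b, S.mul a b = S.mul b a
  mul_assoc : ∀ a b c, S.mul (S.mul a b) c = S.mul a (S.mul b c)
  one_mul : ∀ a, S.mul S.one a = a
  mul_zero : ∀ a, S.mul a S.zero = S.zero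
  distrib : ∀ {a b c : R} (d : R), c ∈ S.add a b →
    S.mul c d ∈ S.add (S.mul a d) (S.mul b d)

/-- A hyperfield: a multiring with `0 ≠ 1` in which every nonzero element is invertible. -/
structure IsHyperfield (S : MulRingOps R) extends IsMulRing S : Prop where
  zero_ne_one : S.zero ≠ S.one
  exists_inv : ∀ a, a ≠ S.zero → ∃ b, S.mul a b = S.one

/-- A hyperfield is hyperbolic when `1 - 1` is everything. -/
def IsHyperbolic (S : MulRingOps R) : Prop :=
  S.add S.one (S.neg S.one) = Set.univ

/-- Morphisms of multirings. -/
def IsHom {A B : Type*} (S : MulRingOps A) (T : MulRingOps B) (f : A → B) : Prop :=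
  (∀ {a b c}, c ∈ S.add a b → f c ∈ T.add (f a) (f b)) ∧
  (∀ a, f (S.neg a) = T.neg (f a)) ∧
  f S.zero = T.zero ∧
  (∀ a b, f (S.mul a b) = T.mul (f a) (f b)) ∧
  f S.one = T.one

end MulRingOps

namespace MulRingOps

variable {F : Type*}

open FreeAbelianGroup in
/-- The subgroup of relations defining `KₙF`: tuples with a zero entry are degenerate,
multilinearity in each slot, and the Steinberg-type relations `ρ(a)⊗ρ(b)` with `b ∈ 1-a`. -/
def krel (S : MulRingOps F) (n : ℕ) : AddSubgroup (FreeAbelianGroup (Fin n → F)) :=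
  AddSubgroup.closure
    ({x | ∃ v : Fin n → F, (∃ i, v i = S.zero) ∧ x = of v} ∪
     {x | ∃ (v : Fin n → F) (i : Fin n) (b c : F), b ≠ S.zero ∧ c ≠ S.zero ∧
        x = of (Function.update v i (S.mul b c)) - of (Function.update v i b) -
            of (Function.update v i c)} ∪
     {x | ∃ v : Fin n → F, (∀ j, v j ≠ S.zero) ∧
        (∃ i j : Fin n, i ≠ j ∧ v i ∈ S.add S.one (S.neg (v j))) ∧ x = of v})

/-- `KₙF`: the n-th K-theory group of the hyperfield `F`, presented as the n-fold tensor
power of `K₁F = Ḟ` (written additively) modulo the Steinberg-type relations. -/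
abbrev KGroup (S : MulRingOps F) (n : ℕ) :=
  FreeAbelianGroup (Fin n → F) ⧸ krel S n

/-- The generator `ρ(v 0)⋯ρ(v (n-1))` of `KₙF`. -/
def kgen (S : MulRingOps F) (n : ℕ) (v : Fin n → F) : KGroup S n :=
  QuotientAddGroup.mk (FreeAbelianGroup.of v)

end MulRingOps

/-- The subgroup `2G` of an additive commutative group. -/
def twoSub (G : Type*) [AddCommGroup G] : AddSubgroup G :=
  AddSubgroup.closure {x : G | ∃ y : G, x = y + y}


namespace MulRingOps

variable {F : Type*}

lemma IsHyperfield.mul_ne_zero' {S : MulRingOps F} (h : S.IsHyperfield)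
    {a b : F} (ha : a ≠ S.zero) (hb : b ≠ S.zero) : S.mul a b ≠ S.zero := by
  intro hab
  obtain ⟨a', ha'⟩ := h.exists_inv a ha
  obtain ⟨b', hb'⟩ := h.exists_inv b hb
  have key : S.mul (S.mul a b) (S.mul a' b') = S.one := by
    rw [h.mul_assoc, ← h.mul_assoc b a' b', h.mul_comm b a', h.mul_assoc a' b b',
      hb', h.mul_comm a' S.one, h.one_mul, ha']
  rw [hab, h.mul_comm, h.mul_zero] at key
  exact h.zero_ne_one key

lemma kgen_eq_zero {S : MulRingOps F} {n : ℕ} {v : Fin n → F}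
    (hv : ∃ i, v i = S.zero) : kgen S n v = 0 := by
  have hm : FreeAbelianGroup.of v ∈ krel S n := by
    refine AddSubgroup.subset_closure ?_
    simp only [Set.mem_union, Set.mem_setOf_eq]
    exact Or.inl (Or.inl ⟨v, hv, rfl⟩)
  exact (QuotientAddGroup.eq_zero_iff _).mpr hm

lemma kgen_mul {S : MulRingOps F} {n : ℕ} (v : Fin n → F) (i : Fin n) {b c : F}
    (hb : b ≠ S.zero) (hc : c ≠ S.zero) :
    kgen S n (Function.update v i (S.mul b c)) =
      kgen S n (Function.update v i b) + kgen S n (Function.update v i c) := by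
  have hm : (FreeAbelianGroup.of (Function.update v i (S.mul b c)) -
      FreeAbelianGroup.of (Function.update v i b) -
      FreeAbelianGroup.of (Function.update v i c)) ∈ krel S n := by
    refine AddSubgroup.subset_closure ?_
    simp only [Set.mem_union, Set.mem_setOf_eq]
    exact Or.inl (Or.inr ⟨v, i, b, c, hb, hc, rfl⟩)
  have h0 := (QuotientAddGroup.eq_zero_iff _).mpr hm
  rw [QuotientAddGroup.mk_sub, QuotientAddGroup.mk_sub, sub_sub, sub_eq_zero] at h0
  exact h0

end MulRingOps

open MulRingOps in
/-- for a hyperfield `F` and `n ≥ 1`, `2Kₙ(F)` is exactly the subgroup of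
finite sums of generators `ρ(a₁)⋯ρ(aₙ)` for which some entry `aₖ` is a nonzero square. -/
theorem two_Kn_eq_square_entries {F : Type*} (S : MulRingOps F) (h : S.IsHyperfield)
    (n : ℕ) (hn : 1 ≤ n) :
    twoSub (KGroup S n) =
      AddSubgroup.closure {x : KGroup S n | ∃ v : Fin n → F,
        (∀ i, v i ≠ S.zero) ∧
        (∃ (k : Fin n) (b : F), b ≠ S.zero ∧ v k = S.mul b b) ∧
        x = kgen S n v} := by
  apply le_antisymm
  · -- 2Kn ≤ RHS
    refine (AddSubgroup.closure_le _).mpr ?_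
    rintro x ⟨y, rfl⟩
    have main : ∀ y : KGroup S n, y + y ∈ AddSubgroup.closure
        {x : KGroup S n | ∃ v : Fin n → F,
          (∀ i, v i ≠ S.zero) ∧
          (∃ (k : Fin n) (b : F), b ≠ S.zero ∧ v k = S.mul b b) ∧
          x = kgen S n v} := by
      intro y
      induction y using QuotientAddGroup.induction_on with
      | H z =>
        induction z using FreeAbelianGroup.induction_on with
        | zero =>
          simpa using (AddSubgroup.closure _).zero_mem
        | of v =>
          by_cases hz : ∃ i, v i = S.zero
          · have : QuotientAddGroup.mk (s := krel S n) (FreeAbelianGroup.of v)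
                = kgen S n v := rfl
            rw [this, kgen_eq_zero hz]
            simpa using (AddSubgroup.closure _).zero_mem
          · push_neg at hz
            set i : Fin n := ⟨0, hn⟩
            have hvi := hz i
            have hkey := kgen_mul v i hvi hvi
            rw [Function.update_eq_self] at hkey
            have : QuotientAddGroup.mk (s := krel S n) (FreeAbelianGroup.of v)
                = kgen S n v := rfl
            rw [this, ← hkey]
            refine AddSubgroup.subset_closure ?_
            refine ⟨Function.update v i (S.mul (v i) (v i)), ?_, ⟨i, v i, hvi, ?_⟩, rfl⟩
            · intro j
              by_cases hji : j = i
              · subst hji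
                rw [Function.update_self]
                exact h.mul_ne_zero' hvi hvi
              · rw [Function.update_of_ne hji]
                exact hz j
            · rw [Function.update_self]
        | neg v ih =>
          rw [QuotientAddGroup.mk_neg, ← neg_add]
          exact (AddSubgroup.closure _).neg_mem ih
        | add a b iha ihb =>
          rw [QuotientAddGroup.mk_add, add_add_add_comm]
          exact (AddSubgroup.closure _).add_mem iha ihb
    exact main y
  · -- RHS ≤ 2Kn
    refine (AddSubgroup.closure_le _).mpr ?_
    rintro x ⟨v, hvnz, ⟨k, b, hb, hvk⟩, rfl⟩
    have h1 : kgen S n v = kgen S n (Function.update v k (S.mul b b)) := by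
      rw [← hvk, Function.update_eq_self]
    rw [SetLike.mem_coe, h1, kgen_mul v k hb hb]
    exact AddSubgroup.subset_closure ⟨kgen S n (Function.update v k b), rfl⟩
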